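/- (Broadcast) For every honest event x, there exists an honest event y such that for every honest peer a there is an event z created by a with x ≤ z ≤ y. -/

import Mathlib

/-- A hashgraph setting: `N` peers, a ternary parents relation
`parents e f g` meaning `e` is the self-parent and `f` the other-parent
of `g`, and a creator function. -/
structure HG (event peer : Type) where
  N : ℕ
  parents : event → event → event → Prop
  creator : event → peer

namespace HG

variable {event peer : Type}

/-- `x` is the self-parent of `y`. -/
def selfParent (H : HG event peer) (x y : event) : Prop := ∃ z, H.parents x z y

/-- `x` is a parent (self- or other-) of `y`. -/
def parent (H : HG event peer) (x y : event) : Prop :=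
  ∃ z, H.parents x z y ∨ H.parents z x y

/-- Ancestor relation `x ≤ y`. -/
def anc (H : HG event peer) : event → event → Prop := Relation.ReflTransGen H.parent

/-- Strict ancestor relation `x < y`. -/
def sanc (H : HG event peer) : event → event → Prop := Relation.TransGen H.parent

/-- Self-ancestor relation `x ⊑ y`. -/
def selfAnc (H : HG event peer) : event → event → Prop := Relation.ReflTransGen H.selfParent

/-- Strict self-ancestor relation `x ⊏ y`. -/
def strictSelfAnc (H : HG event peer) : event → event → Prop := Relation.TransGen H.selfParent

/-- An initial event has no parents. -/
def initial (H : HG event peer) (x : event) : Prop := ¬ ∃ u v, H.parents u v x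

/-- `x` and `y` form a fork: same creator, neither a self-ancestor of the other. -/
def fork (H : HG event peer) (x y : event) : Prop :=
  H.creator x = H.creator y ∧ ¬ H.selfAnc x y ∧ ¬ H.selfAnc y x

/-- `y` sees `x` (`x ⊴ y`). -/
def sees (H : HG event peer) (x y : event) : Prop :=
  H.anc x y ∧
    ¬ ∃ z z', H.fork z z' ∧ H.anc z y ∧ H.anc z' y ∧ H.creator z = H.creator x

/-- `n` is a supermajority of the `N` peers: `n > (2/3)·N`. -/
def supermajor (H : HG event peer) (n : ℕ) : Prop := 2 * H.N < 3 * n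

/-- `y` strongly sees `x` (`x ≪ y`): there are intermediaries, on a
supermajority of the peers, each of which sees `x` and is an ancestor of `y`. -/
def stsees (H : HG event peer) (x y : event) : Prop :=
  ∃ C : Finset peer, H.supermajor C.card ∧
    ∀ p ∈ C, ∃ z, H.creator z = p ∧ H.sees x z ∧ H.anc z y

end HG

/-- Round assignment: initial events are round 0; an event advances past the
max of its parents' rounds iff it strongly sees round-max events on a
supermajority of peers (the third case affirmatively states the negation,
via a superminority of peers all of whose strongly-seen events are earlier). -/
inductive Round {event peer : Type} (H : HG event peer) : ℕ → event → Prop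
  | initial {x : event} : H.initial x → Round H 0 x
  | advance {x y z : event} {m n : ℕ} (C : Finset peer) (wit : peer → event) :
      H.parents y z x → Round H m y → Round H n z →
      H.supermajor C.card →
      (∀ p, p ∈ C → H.creator (wit p) = p) →
      (∀ p, p ∈ C → H.stsees (wit p) x) →
      (∀ p, p ∈ C → Round H (max m n) (wit p)) →
      Round H (max m n + 1) x
  | stay {x y z : event} {m n : ℕ} (A : Finset peer) (r : event → ℕ) :
      H.parents y z x → Round H m y → Round H n z →
      H.N ≤ 3 * A.card →
      (∀ p, p ∈ A → ∀ w, H.creator w = p → H.stsees w x → r w < max m n) →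
      (∀ p, p ∈ A → ∀ w, H.creator w = p → H.stsees w x → Round H (r w) w) →
      Round H (max m n) x

/-- A round-`n` witness: an event of round `n` none of whose strict
self-ancestors is in round `n`. -/
def rwitness {event peer : Type} (H : HG event peer) (n : ℕ) (x : event) : Prop :=
  Round H n x ∧ ∀ y, H.strictSelfAnc y x → ¬ Round H n y

/-- The round-`n` witnesses strongly seen by `y`: these send votes to `y`. -/
def elector {event peer : Type} (H : HG event peer) (n : ℕ) (y w : event) : Prop :=
  rwitness H n w ∧ H.stsees w y

/-- `election elec V t f`: among the events satisfying `elec`,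
`t` vote true and `f` vote false (and all votes are accounted for). -/
def election {event : Type} (elec : event → Prop) (V : event → Bool → Prop)
    (t f : ℕ) : Prop :=
  ∃ E T F : Finset event,
    (∀ w, w ∈ E ↔ elec w) ∧ E.card = t + f ∧ T.card = t ∧ F.card = f ∧
    (∀ w ∈ T, elec w ∧ V w true) ∧ (∀ w ∈ F, elec w ∧ V w false)

/-- `vote` is a fixed point of the Hashgraph voting rules with first regular
round parameter `d`, coin frequency `c`, and coin `coin`. -/
def voteFix {event peer : Type} (H : HG event peer) (d c : ℕ) (coin : event → Bool)
    (vote : event → event → Bool → Prop) : Prop :=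
  ∀ x y v, vote x y v ↔
    ((∃ m n, rwitness H m x ∧ rwitness H n y ∧ m < n ∧ n ≤ m + d ∧
        (v = true ↔ H.sanc x y)) ∨
     (∃ m n t f, rwitness H m x ∧ rwitness H n y ∧ m + d < n ∧ (n - m) % c ≠ 0 ∧
        election (elector H (n - 1) y) (vote x) t f ∧
        ((f ≤ t ∧ v = true) ∨ (t < f ∧ v = false))) ∨
     (∃ m n t f, rwitness H m x ∧ rwitness H n y ∧ m < n ∧ (n - m) % c = 0 ∧
        election (elector H (n - 1) y) (vote x) t f ∧
        H.supermajor (if v then t else f)) ∨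
     (∃ m n t f, rwitness H m x ∧ rwitness H n y ∧ m < n ∧ (n - m) % c = 0 ∧
        election (elector H (n - 1) y) (vote x) t f ∧
        3 * t ≤ 2 * H.N ∧ 3 * f ≤ 2 * H.N ∧ v = coin y))

/-- `y` decides `b` on `x`'s fame: in a non-coin round more than `d` rounds
after `x`'s, `y` receives more than `2N/3` votes of value `b`. -/
def decision {event peer : Type} (H : HG event peer) (d c : ℕ)
    (vote : event → event → Bool → Prop) (x y : event) (b : Bool) : Prop :=
  ∃ i j t f, rwitness H i x ∧ rwitness H j y ∧ i + d < j ∧ (j - i) % c ≠ 0 ∧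
    election (elector H (j - 1) y) (vote x) t f ∧
    ((b = true ∧ H.supermajor t) ∨ (b = false ∧ H.supermajor f))

/-- (Broadcast) For every honest event `x` there is an honest event `y` such that, in its ancestry, `x` has reached every honest peer. -/
theorem broadcast {event peer : Type} (H : HG event peer)
    (hpc : ∀ e f g, H.parents e f g → H.creator e = H.creator g)
    (honest : Finset peer) (spawn : ℕ → event)
    (hinj : ∀ i j, spawn i = spawn j → i = j)
    (hparent : ∀ x i, H.parent x (spawn i) → ∃ j, x = spawn j ∧ j < i)
    (hforks : ∀ i j, H.creator (spawn i) ∈ honest → ¬ H.fork (spawn i) (spawn j))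
    (hsync : ∀ i a b, a ∈ honest → b ∈ honest → a ≠ b →
      ∃ j k, i ≤ j ∧ j ≤ k ∧ H.creator (spawn j) = a ∧ H.creator (spawn k) = b ∧
        H.sanc (spawn j) (spawn k))
    (hno_orphans : ∀ x : event, ∃ i, x = spawn i)
    (x : event) (hx : H.creator x ∈ honest) :
    ∃ y, H.creator y ∈ honest ∧
      ∀ a ∈ honest, ∃ z, H.creator z = a ∧ H.anc x z ∧ H.anc z y := by
  -- ancestors of spawn m have index ≤ m
  have hidx : ∀ u m, H.anc u (spawn m) → ∃ j, u = spawn j ∧ j ≤ m := by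
    intro u m h
    induction h using Relation.ReflTransGen.head_induction_on with
    | refl => exact ⟨m, rfl, le_rfl⟩
    | head hp _ ih =>
      obtain ⟨j', rfl, hj'⟩ := ih
      obtain ⟨j, rfl, hj⟩ := hparent _ _ hp
      exact ⟨j, rfl, le_of_lt (lt_of_lt_of_le hj hj')⟩
  have selfAnc_anc : ∀ u v, H.selfAnc u v → H.anc u v := by
    intro u v h
    exact Relation.ReflTransGen.mono (r := H.selfParent) (p := H.parent) (fun a b (hab : H.selfParent a b) => by obtain ⟨z, hz⟩ := hab; exact ⟨z, Or.inl hz⟩) u v h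
  -- main claim, by induction over subsets of honest
  have key : ∀ s : Finset peer, s ⊆ honest →
      ∃ y, H.creator y ∈ honest ∧ H.anc x y ∧
        ∀ a ∈ s, ∃ z, H.creator z = a ∧ H.anc x z ∧ H.anc z y := by
    haveI := Classical.decEq peer
    intro s
    induction s using Finset.induction_on with
    | empty => exact fun _ => ⟨x, hx, Relation.ReflTransGen.refl, fun a ha => absurd ha (by simp)⟩
    | @insert a s ha ih =>
      intro hsub
      have hah : a ∈ honest := hsub (Finset.mem_insert_self a s)
      obtain ⟨y, hy, hxy, hall⟩ := ih (fun p hp => hsub (Finset.mem_insert_of_mem hp))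
      by_cases hac : a = H.creator y
      · refine ⟨y, hy, hxy, fun b hb => ?_⟩
        rcases Finset.mem_insert.mp hb with rfl | hb
        · exact ⟨y, hac.symm, hxy, Relation.ReflTransGen.refl⟩
        · exact hall b hb
      · obtain ⟨m, rfl⟩ := hno_orphans y
        obtain ⟨j, k, hmj, hjk, hcj, hck, hs⟩ :=
          hsync (m + 1) (H.creator (spawn m)) a hy hah (fun h => hac h.symm)
        -- spawn m is a self-ancestor of spawn j
        have hnf := hforks j m (hcj ▸ hy)
        have hcomp : H.selfAnc (spawn j) (spawn m) ∨ H.selfAnc (spawn m) (spawn j) := by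
          by_contra hc
          push_neg at hc
          exact hnf ⟨hcj, hc.1, hc.2⟩
        have hmjanc : H.anc (spawn m) (spawn j) := by
          rcases hcomp with h | h
          · obtain ⟨j', hj', hle⟩ := hidx _ _ (selfAnc_anc _ _ h)
            have := hinj _ _ hj'
            omega
          · exact selfAnc_anc _ _ h
        have hjk' : H.anc (spawn j) (spawn k) := hs.to_reflTransGen
        refine ⟨spawn k, hck ▸ hah, hxy.trans (hmjanc.trans hjk'), fun b hb => ?_⟩
        rcases Finset.mem_insert.mp hb with rfl | hb
        · exact ⟨spawn k, hck, hxy.trans (hmjanc.trans hjk'), Relation.ReflTransGen.refl⟩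
        · obtain ⟨z, hz1, hz2, hz3⟩ := hall b hb
          exact ⟨z, hz1, hz2, hz3.trans (hmjanc.trans hjk')⟩
  obtain ⟨y, hy, _, hall⟩ := key honest (le_refl _)
  exact ⟨y, hy, hall⟩
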